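/- If U is an elementary zero-sum sequence over G_0 ⊆ ℤ^r with supp(U) ∩ supp(−U) = ∅, then |supp(U)| ≤ r + 1. -/

import Mathlib

/-- A zero-sum sequence over `G₀ ⊆ ℤ^r`: a finite multiset of elements of `G₀` summing to `0`. -/
def IsZeroSumSeq {r : ℕ} (G₀ : Set (Fin r → ℤ)) (S : Multiset (Fin r → ℤ)) : Prop :=
  (∀ g ∈ S, g ∈ G₀) ∧ S.sum = 0

/-- An atom (minimal zero-sum sequence) over `G₀`: a nonempty zero-sum sequence with no
proper nonempty zero-sum subsequence. -/
def IsAtomSeq {r : ℕ} (G₀ : Set (Fin r → ℤ)) (S : Multiset (Fin r → ℤ)) : Prop :=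
  IsZeroSumSeq G₀ S ∧ S ≠ 0 ∧
    ∀ T : Multiset (Fin r → ℤ), T ≤ S → T ≠ 0 → T.sum = 0 → T = S

/-- The signed support `supp⁺(S) = {g : v_g(S) - v_{-g}(S) ≠ 0}`. -/
def signedSupp {r : ℕ} (S : Multiset (Fin r → ℤ)) : Set (Fin r → ℤ) :=
  {g | S.count g ≠ S.count (-g)}

/-- An elementary zero-sum sequence over `G₀`: one whose signed support is nonempty and
minimal among nonempty signed supports of zero-sum sequences over `G₀`. -/
def IsElemZeroSumSeq {r : ℕ} (G₀ : Set (Fin r → ℤ)) (S : Multiset (Fin r → ℤ)) : Prop :=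
  IsZeroSumSeq G₀ S ∧ signedSupp S ≠ ∅ ∧
    ∀ T : Multiset (Fin r → ℤ), IsZeroSumSeq G₀ T → signedSupp T ≠ ∅ →
      signedSupp T ⊆ signedSupp S → signedSupp T = signedSupp S

/-- An elementary atom over `G₀`. -/
def IsElemAtom {r : ℕ} (G₀ : Set (Fin r → ℤ)) (S : Multiset (Fin r → ℤ)) : Prop :=
  IsAtomSeq G₀ S ∧ IsElemZeroSumSeq G₀ S

lemma aux_sum_sum {ι α : Type*} [AddCommMonoid α] (s : Finset ι) (f : ι → Multiset α) :
    (∑ i ∈ s, f i).sum = ∑ i ∈ s, (f i).sum := by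
  induction s using Finset.cons_induction with
  | empty => simp
  | cons a s ha ih => rw [Finset.sum_cons, Finset.sum_cons, Multiset.sum_add, ih]


/-- If `U` is an elementary zero-sum sequence over `G₀ ⊆ ℤ^r` with
`supp(U) ∩ supp(−U) = ∅`, then `|supp(U)| ≤ r + 1`. -/
theorem stmt6 {r : ℕ} (G₀ : Set (Fin r → ℤ)) (U : Multiset (Fin r → ℤ))
    (hU : IsElemZeroSumSeq G₀ U) (hd : ∀ g ∈ U, -g ∉ U) :
    U.toFinset.card ≤ r + 1 := by
  by_contra hcard
  push_neg at hcard
  obtain ⟨hUz, hne, hmin⟩ := hU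
  set s := U.toFinset with hs
  have hsr : r + 2 ≤ s.card := hcard
  have hsne : s.Nonempty := Finset.card_pos.mp (by omega)
  haveI : Nonempty ↥s := Finset.nonempty_coe_sort.mpr hsne
  -- the vectors over ℚ
  let gQ : ↥s → (Fin r → ℚ) := fun i j => ((i : Fin r → ℤ) j : ℚ)
  let φ : (↥s → ℚ) →ₗ[ℚ] (Fin r → ℚ) := Fintype.linearCombination ℚ gQ
  -- kernel has dimension ≥ 2
  have hker : 2 ≤ Module.finrank ℚ (LinearMap.ker φ) := by
    have h1 := LinearMap.finrank_range_add_finrank_ker φ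
    have h2 : Module.finrank ℚ ↥(LinearMap.range φ) ≤ r := by
      calc Module.finrank ℚ ↥(LinearMap.range φ) ≤ Module.finrank ℚ (Fin r → ℚ) :=
            Submodule.finrank_le _
        _ = r := by simp [Module.finrank_fintype_fun_eq_card]
    have h3 : Module.finrank ℚ (↥s → ℚ) = s.card := by
      rw [Module.finrank_fintype_fun_eq_card, Fintype.card_coe]
    omega
  -- the multiplicity vector m
  let m : ↥s → ℚ := fun i => (U.count (i : Fin r → ℤ) : ℚ)
  have hm0 : ∀ i : ↥s, 0 < m i := by
    intro i
    have h0 : 0 < U.count (i : Fin r → ℤ) := Multiset.count_pos.mpr (Multiset.mem_toFinset.mp i.2)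
    show (0:ℚ) < ((U.count (i : Fin r → ℤ) : ℕ) : ℚ)
    exact_mod_cast h0
  have hmne : m ≠ 0 := by
    intro h
    have h2 := hm0 (Classical.arbitrary ↥s)
    rw [h] at h2
    simp at h2
  have hφeq : ∀ y : ↥s → ℚ, ∀ j : Fin r,
      (φ y) j = ∑ i : ↥s, y i * ((i : Fin r → ℤ) j : ℚ) := by
    intro y j
    show (Fintype.linearCombination ℚ gQ y) j = _
    rw [Fintype.linearCombination_apply, Finset.sum_apply]
    rfl
  have hmker : m ∈ LinearMap.ker φ := by
    rw [LinearMap.mem_ker]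
    funext j
    have hz : ∑ a ∈ s, (U.count a : ℤ) * a j = 0 := by
      have h := congrFun hUz.2 j
      rw [Finset.sum_multiset_count U] at h
      rw [Finset.sum_apply] at h
      simpa [mul_comm] using h
    have he : (φ m) j = ∑ a ∈ s, (U.count a : ℚ) * (a j : ℚ) := by
      rw [hφeq]
      exact Finset.sum_coe_sort s (fun a => (U.count a : ℚ) * (a j : ℚ))
    rw [he]
    have hc : ((∑ a ∈ s, (U.count a : ℤ) * a j : ℤ) : ℚ) = 0 := by rw [hz]; simp
    push_cast at hc
    simpa using hc
  -- a kernel vector not proportional to m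
  obtain ⟨x, hxker, hxm⟩ : ∃ x ∈ LinearMap.ker φ, ∀ a : ℚ, a • m ≠ x := by
    by_contra h
    push_neg at h
    have hle : LinearMap.ker φ ≤ Submodule.span ℚ {m} := by
      intro x hx
      obtain ⟨a, ha⟩ := h x hx
      exact Submodule.mem_span_singleton.mpr ⟨a, ha⟩
    have hmono := Submodule.finrank_mono (t := Submodule.span ℚ {m}) hle
    rw [finrank_span_singleton hmne] at hmono
    omega
  -- maximize x i / m i and build a nonnegative kernel vector z with a zero entry
  obtain ⟨i₀, -, hmax⟩ := Finset.exists_max_image Finset.univ (fun i : ↥s => x i / m i)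
    Finset.univ_nonempty
  set μ : ℚ := x i₀ / m i₀ with hμ
  set z : ↥s → ℚ := μ • m - x with hzdef
  have hzker : z ∈ LinearMap.ker φ :=
    Submodule.sub_mem _ (Submodule.smul_mem _ μ hmker) hxker
  have hznn : ∀ i, 0 ≤ z i := by
    intro i
    have h1 : x i / m i ≤ μ := hmax i (Finset.mem_univ i)
    have h2 : x i ≤ μ * m i := (div_le_iff₀ (hm0 i)).mp h1
    simp only [hzdef, Pi.sub_apply, Pi.smul_apply, smul_eq_mul]
    linarith
  have hzi₀ : z i₀ = 0 := by
    simp only [hzdef, Pi.sub_apply, Pi.smul_apply, smul_eq_mul, hμ]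
    rw [div_mul_cancel₀ _ (hm0 i₀).ne', sub_self]
  have hzne : z ≠ 0 := by
    intro h
    exact hxm μ (sub_eq_zero.mp h)
  -- clear denominators: natural number multiplicities c
  set N : ℕ := ∏ i : ↥s, (z i).den with hN
  have hNpos : 0 < N := Finset.prod_pos (fun i _ => (z i).pos)
  have hdvd : ∀ i : ↥s, (z i).den ∣ N := fun i => Finset.dvd_prod_of_mem _ (Finset.mem_univ i)
  have hcex : ∀ i : ↥s, ∃ c : ℕ, (c : ℚ) = (N : ℚ) * z i := by
    intro i
    obtain ⟨M, hM⟩ := hdvd i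
    have hnum : 0 ≤ (z i).num := Rat.num_nonneg.mpr (hznn i)
    refine ⟨M * (z i).num.toNat, ?_⟩
    have ht : ((z i).num.toNat : ℤ) = (z i).num := Int.toNat_of_nonneg hnum
    have : (N : ℚ) * z i = (M : ℚ) * ((z i) * ((z i).den : ℚ)) := by
      rw [hM]; push_cast; ring
    rw [this, Rat.mul_den_eq_num]
    have ht' : (((z i).num.toNat : ℕ) : ℚ) = ((z i).num : ℚ) := by exact_mod_cast ht
    push_cast
    rw [ht']
  choose c hc using hcex
  -- the new multiset T
  set T : Multiset (Fin r → ℤ) := ∑ i : ↥s, c i • ({(i : Fin r → ℤ)} : Multiset (Fin r → ℤ))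
    with hT
  have hTcount : ∀ g, T.count g = if hg : g ∈ s then c ⟨g, hg⟩ else 0 := by
    intro g
    rw [hT, Multiset.count_sum']
    by_cases hg : g ∈ s
    · rw [dif_pos hg]
      rw [Finset.sum_eq_single (⟨g, hg⟩ : ↥s)]
      · simp [Multiset.count_nsmul, Multiset.count_singleton]
      · intro b _ hb
        have : g ≠ (b : Fin r → ℤ) := by
          intro hgb
          exact hb (by apply Subtype.ext; exact hgb.symm)
        simp [Multiset.count_nsmul, Multiset.count_singleton, this]
      · intro hmem
        exact absurd (Finset.mem_univ _) hmem
    · rw [dif_neg hg]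
      apply Finset.sum_eq_zero
      intro i _
      have : g ≠ (i : Fin r → ℤ) := by
        intro hgi
        exact hg (hgi ▸ i.2)
      simp [Multiset.count_nsmul, Multiset.count_singleton, this]
  -- T is a zero-sum sequence over G₀
  have hTmem : ∀ g ∈ T, g ∈ G₀ := by
    intro g hg
    have : T.count g ≠ 0 := by
      rw [← Multiset.count_pos] at hg; omega
    rw [hTcount] at this
    by_cases hgs : g ∈ s
    · exact hUz.1 g (Multiset.mem_toFinset.mp hgs)
    · rw [dif_neg hgs] at this; exact absurd rfl this
  have hTsum : T.sum = 0 := by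
    have h1 : T.sum = ∑ i : ↥s, c i • (i : Fin r → ℤ) := by
      rw [hT, aux_sum_sum]
      congr 1
      funext i
      rw [Multiset.sum_nsmul, Multiset.sum_singleton]
    rw [h1]
    funext j
    have hφz : (φ z) j = 0 := by rw [LinearMap.mem_ker.mp hzker]; rfl
    rw [hφeq] at hφz
    have hQ : ((∑ i : ↥s, c i • (i : Fin r → ℤ)) j : ℚ) = 0 := by
      rw [Finset.sum_apply]
      simp only [Pi.smul_apply, nsmul_eq_mul]
      push_cast
      have : ∑ i : ↥s, (c i : ℚ) * ((i : Fin r → ℤ) j : ℚ)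
          = (N : ℚ) * ∑ i : ↥s, z i * ((i : Fin r → ℤ) j : ℚ) := by
        rw [Finset.mul_sum]
        congr 1
        funext i
        rw [hc i]; ring
      rw [this, hφz, mul_zero]
    have := hQ
    exact_mod_cast this
  -- a witness where z is positive
  obtain ⟨i₁, hi₁⟩ : ∃ i, z i ≠ 0 := by
    by_contra h
    push_neg at h
    exact hzne (funext h)
  have hci₁ : c i₁ ≠ 0 := by
    intro h
    have := hc i₁
    rw [h] at this
    simp only [Nat.cast_zero] at this
    have hNne : (N : ℚ) ≠ 0 := by exact_mod_cast hNpos.ne'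
    exact hi₁ ((mul_eq_zero.mp this.symm).resolve_left hNne)
  have hnegnot : ∀ g : Fin r → ℤ, g ∈ s → -g ∉ s := by
    intro g hg
    rw [hs, Multiset.mem_toFinset] at hg ⊢
    exact hd g hg
  -- signedSupp T ⊆ signedSupp U
  have hsub : signedSupp T ⊆ signedSupp U := by
    intro g hg
    simp only [signedSupp, Set.mem_setOf_eq] at hg ⊢
    by_cases hgs : g ∈ s
    · have h1 : 0 < U.count g := Multiset.count_pos.mpr (Multiset.mem_toFinset.mp hgs)
      have h2 : U.count (-g) = 0 :=
        Multiset.count_eq_zero.mpr (hd g (Multiset.mem_toFinset.mp hgs))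
      omega
    · by_cases hgs' : -g ∈ s
      · have h1 : 0 < U.count (-g) := Multiset.count_pos.mpr (Multiset.mem_toFinset.mp hgs')
        have h2 : U.count g = 0 := by
          rw [Multiset.count_eq_zero]
          intro hgU
          exact (hd (-g) (Multiset.mem_toFinset.mp hgs')) (by rwa [neg_neg])
        omega
      · exfalso
        apply hg
        rw [hTcount, hTcount, dif_neg hgs, dif_neg (by simpa using hgs')]
  -- signedSupp T is nonempty: i₁ is in it
  have hTne : signedSupp T ≠ ∅ := by
    have : (i₁ : Fin r → ℤ) ∈ signedSupp T := by
      simp only [signedSupp, Set.mem_setOf_eq]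
      rw [hTcount, hTcount, dif_pos i₁.2, dif_neg (hnegnot _ i₁.2)]
      simpa using hci₁
    intro h
    rw [h] at this
    exact this
  -- minimality gives equality, but i₀ is missing from signedSupp T
  have heq := hmin T ⟨hTmem, hTsum⟩ hTne hsub
  have hi₀U : (i₀ : Fin r → ℤ) ∈ signedSupp U := by
    simp only [signedSupp, Set.mem_setOf_eq]
    have h1 : 0 < U.count (i₀ : Fin r → ℤ) :=
      Multiset.count_pos.mpr (Multiset.mem_toFinset.mp i₀.2)
    have h2 : U.count (-(i₀ : Fin r → ℤ)) = 0 :=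
      Multiset.count_eq_zero.mpr (hd _ (Multiset.mem_toFinset.mp i₀.2))
    omega
  have hi₀T : (i₀ : Fin r → ℤ) ∉ signedSupp T := by
    simp only [signedSupp, Set.mem_setOf_eq, not_not]
    have hc0 : c i₀ = 0 := by
      have := hc i₀
      rw [hzi₀, mul_zero] at this
      exact_mod_cast this
    rw [hTcount, hTcount, dif_pos i₀.2, dif_neg (hnegnot _ i₀.2), hc0]
  rw [heq] at hi₀T
  exact hi₀T hi₀U
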